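/- (Farkas Lemma, Version IV) Let Y be a d×p real matrix and V a d×q real matrix. For every z ∈ ℝᵈ, exactly one of the following alternatives holds: (a) there exist u ∈ ℝᵖ and t ∈ ℝ^q with u ≥ 0, t ≥ 0, u₁ + ⋯ + u_p = 1, and z = Yu + Vt; (b) there exist α ∈ ℝ and c ∈ ℝᵈ such that cᵀyᵢ ≥ α for every column yᵢ of Y (1 ≤ i ≤ p), cᵀvⱼ ≥ 0 for every column vⱼ of V (1 ≤ j ≤ q), and cᵀz < α. -/

import Mathlib

open Finset
open scoped RealInnerProductSpace

/-- Conic Carathéodory: any nonnegative combination of a finite family of vectors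
can be rewritten as a nonnegative combination supported on a linearly independent
subfamily. -/
lemma farkasIV_cone_caratheodory {ι E : Type*} [Fintype ι] [DecidableEq ι]
    [AddCommGroup E] [Module ℝ E] (g : ι → E) (w : ι → ℝ) (hw : ∀ i, 0 ≤ w i) :
    ∃ (S : Finset ι) (w' : ι → ℝ),
      LinearIndependent ℝ (fun i : S => g i) ∧ (∀ i, 0 ≤ w' i) ∧
      (∀ i ∉ S, w' i = 0) ∧ ∑ i, w' i • g i = ∑ i, w i • g i := by
  suffices H : ∀ n (w : ι → ℝ), (∀ i, 0 ≤ w i) →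
      (univ.filter fun i => w i ≠ 0).card ≤ n →
      ∃ (S : Finset ι) (w' : ι → ℝ),
        LinearIndependent ℝ (fun i : S => g i) ∧ (∀ i, 0 ≤ w' i) ∧
        (∀ i ∉ S, w' i = 0) ∧ ∑ i, w' i • g i = ∑ i, w i • g i by
    exact H _ w hw le_rfl
  intro n
  induction n with
  | zero =>
    intro w hw hcard
    have hfe : (univ.filter fun i => w i ≠ 0) = ∅ := card_eq_zero.1 (Nat.le_zero.1 hcard)
    have hz : ∀ i, w i = 0 := by
      intro i
      by_contra h
      have : i ∈ (univ.filter fun i => w i ≠ 0) := by simp [h]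
      simp [hfe] at this
    exact ⟨∅, w, linearIndependent_empty_type, hw, fun i _ => hz i, rfl⟩
  | succ n IH =>
    intro w hw hcard
    set S : Finset ι := univ.filter fun i => w i ≠ 0 with hS
    by_cases hind : LinearIndependent ℝ (fun i : S => g i)
    · refine ⟨S, w, hind, hw, ?_, rfl⟩
      intro i hi
      by_contra h
      exact hi (by simp [hS, h])
    · obtain ⟨gc, hgc0, j0, hj0⟩ := Fintype.not_linearIndependent_iff.1 hind
      set c : ι → ℝ := fun i => if h : i ∈ S then gc ⟨i, h⟩ else 0 with hc
      have hcS : ∀ i ∉ S, c i = 0 := fun i hi => by simp [hc, hi]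
      have hcsum : ∑ i, c i • g i = 0 := by
        rw [← Finset.sum_subset (Finset.subset_univ S)
          (fun i _ hi => by rw [hcS i hi, zero_smul])]
        rw [← Finset.sum_attach S (fun i => c i • g i)]
        simpa [hc] using hgc0
      have key : ∀ c : ι → ℝ, (∀ i ∉ S, c i = 0) → ∑ i, c i • g i = 0 →
          (∃ j, 0 < c j) →
          ∃ (T : Finset ι) (w' : ι → ℝ),
            LinearIndependent ℝ (fun i : T => g i) ∧ (∀ i, 0 ≤ w' i) ∧
            (∀ i ∉ T, w' i = 0) ∧ ∑ i, w' i • g i = ∑ i, w i • g i := by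
        intro c hcS hcsum ⟨j, hj⟩
        set T : Finset ι := univ.filter fun i => 0 < c i with hT
        have hjT : j ∈ T := by simp [hT, hj]
        obtain ⟨i0, hi0T, hmin⟩ := T.exists_min_image (fun i => w i / c i) ⟨j, hjT⟩
        have hci0 : 0 < c i0 := by simpa [hT] using hi0T
        set r : ℝ := w i0 / c i0 with hr
        have hr0 : 0 ≤ r := div_nonneg (hw i0) hci0.le
        set w' : ι → ℝ := fun i => w i - r * c i with hw'
        have hw'0 : ∀ i, 0 ≤ w' i := by
          intro i
          by_cases h : 0 < c i
          · have := hmin i (by simp [hT, h])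
            rw [le_div_iff₀ h] at this
            simp only [hw']
            linarith
          · push_neg at h
            have : r * c i ≤ 0 := mul_nonpos_of_nonneg_of_nonpos hr0 h
            have := hw i
            simp only [hw']
            linarith
        have hwi0 : w' i0 = 0 := by
          simp only [hw', hr]
          field_simp
          ring
        have hsupp : (univ.filter fun i => w' i ≠ 0) ⊆ S.erase i0 := by
          intro i hi
          simp only [mem_filter, mem_univ, true_and] at hi
          refine Finset.mem_erase.2 ⟨?_, ?_⟩
          · rintro rfl; exact hi hwi0
          · by_contra hiS
            have hwi : w i = 0 := by
              by_contra h; exact hiS (by simp [hS, h])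
            exact hi (by simp [hw', hwi, hcS i hiS])
        have hi0S : i0 ∈ S := by
          by_contra h
          exact absurd (hcS i0 h) (ne_of_gt hci0)
        have hcard' : (univ.filter fun i => w' i ≠ 0).card ≤ n := by
          have h1 := Finset.card_le_card hsupp
          have h2 := Finset.card_erase_of_mem hi0S
          omega
        have hsum' : ∑ i, w' i • g i = ∑ i, w i • g i := by
          simp only [hw', sub_smul, Finset.sum_sub_distrib, mul_smul,
            ← Finset.smul_sum, hcsum, smul_zero, sub_zero]
        obtain ⟨T', w'', h1, h2, h3, h4⟩ := IH w' hw'0 hcard'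
        exact ⟨T', w'', h1, h2, h3, h4.trans hsum'⟩
      by_cases hpos : ∃ j, 0 < c j
      · exact key c hcS hcsum hpos
      · refine key (-c) (fun i hi => by simp [hcS i hi]) (by simpa using hcsum) ?_
        push_neg at hpos
        refine ⟨j0, ?_⟩
        have h1 : c j0 ≠ 0 := by
          simp only [hc, dif_pos j0.2]
          simpa using hj0
        have := hpos j0
        simp only [Pi.neg_apply]
        cases lt_or_eq_of_le this with
        | inl h => linarith
        | inr h => exact absurd h h1

/-- The cone spanned by a linearly independent subfamily is closed. -/
lemma farkasIV_coneS_isClosed {ι : Type*} [Fintype ι] [DecidableEq ι] {m : ℕ}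
    (g : ι → EuclideanSpace ℝ (Fin m)) (S : Finset ι)
    (hS : LinearIndependent ℝ (fun i : S => g i)) :
    IsClosed {x : EuclideanSpace ℝ (Fin m) |
      ∃ w : ι → ℝ, (∀ i, 0 ≤ w i) ∧ (∀ i ∉ S, w i = 0) ∧ x = ∑ i, w i • g i} := by
  classical
  set L : (S → ℝ) →ₗ[ℝ] EuclideanSpace ℝ (Fin m) :=
    ∑ i : S, (LinearMap.proj i).smulRight (g i) with hL
  have hLapp : ∀ v : S → ℝ, L v = ∑ i : S, v i • g i := by
    intro v
    simp [hL, LinearMap.sum_apply, LinearMap.smulRight_apply, LinearMap.proj_apply]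
  have hker : LinearMap.ker L = ⊥ := by
    rw [LinearMap.ker_eq_bot']
    intro v hv
    rw [hLapp] at hv
    have := Fintype.linearIndependent_iff.1 hS v hv
    funext i; exact this i
  have hemb := LinearMap.isClosedEmbedding_of_injective (𝕜 := ℝ) (f := L) hker
  have hC : IsClosed {v : S → ℝ | ∀ i, 0 ≤ v i} := by
    have : {v : S → ℝ | ∀ i, 0 ≤ v i} = ⋂ i, {v | 0 ≤ v i} := by
      ext v; simp
    rw [this]
    exact isClosed_iInter fun i => isClosed_le continuous_const (continuous_apply i)
  have heq : {x : EuclideanSpace ℝ (Fin m) |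
      ∃ w : ι → ℝ, (∀ i, 0 ≤ w i) ∧ (∀ i ∉ S, w i = 0) ∧ x = ∑ i, w i • g i}
      = L '' {v : S → ℝ | ∀ i, 0 ≤ v i} := by
    ext x
    constructor
    · rintro ⟨w, hw0, hwS, rfl⟩
      refine ⟨fun i => w i, fun i => hw0 i, ?_⟩
      rw [hLapp]
      rw [← Finset.sum_subset (Finset.subset_univ S)
        (fun i _ hi => by rw [hwS i hi, zero_smul])]
      exact (Finset.sum_attach S (fun i => w i • g i))
    · rintro ⟨v, hv, rfl⟩
      refine ⟨fun i => if h : i ∈ S then v ⟨i, h⟩ else 0, ?_, ?_, ?_⟩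
      · intro i; by_cases h : i ∈ S <;> simp [h, hv _]
      · intro i hi; simp [hi]
      · rw [hLapp]
        rw [← Finset.sum_subset (Finset.subset_univ S)
          (fun i _ hi => by simp [hi])]
        rw [← Finset.sum_attach S (fun i => (if h : i ∈ S then v ⟨i, h⟩ else 0) • g i)]
        congr 1
        funext i
        simp [i.2]
  rw [heq]
  exact hemb.isClosedMap _ hC

/-- A finitely generated convex cone in Euclidean space is closed. -/
lemma farkasIV_cone_isClosed {ι : Type*} [Fintype ι] [DecidableEq ι] {m : ℕ}
    (g : ι → EuclideanSpace ℝ (Fin m)) :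
    IsClosed {x : EuclideanSpace ℝ (Fin m) |
      ∃ w : ι → ℝ, (∀ i, 0 ≤ w i) ∧ x = ∑ i, w i • g i} := by
  classical
  have heq : {x : EuclideanSpace ℝ (Fin m) | ∃ w : ι → ℝ, (∀ i, 0 ≤ w i) ∧ x = ∑ i, w i • g i}
      = ⋃ S : {S : Finset ι // LinearIndependent ℝ (fun i : S => g i)},
          {x : EuclideanSpace ℝ (Fin m) |
            ∃ w : ι → ℝ, (∀ i, 0 ≤ w i) ∧ (∀ i ∉ S.1, w i = 0) ∧ x = ∑ i, w i • g i} := by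
    ext x
    simp only [Set.mem_setOf_eq, Set.mem_iUnion]
    constructor
    · rintro ⟨w, hw0, rfl⟩
      obtain ⟨S, w', hind, hw'0, hw'S, hsum⟩ := farkasIV_cone_caratheodory g w hw0
      exact ⟨⟨S, hind⟩, w', hw'0, hw'S, hsum.symm⟩
    · rintro ⟨S, w, hw0, _, rfl⟩
      exact ⟨w, hw0, rfl⟩
  rw [heq]
  exact isClosed_iUnion_of_finite fun S => farkasIV_coneS_isClosed g S.1 S.2

lemma farkasIV_euc_sum_apply {ι : Type*} (s : Finset ι) {m : ℕ}
    (f : ι → EuclideanSpace ℝ (Fin m)) (k : Fin m) :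
    (∑ i ∈ s, f i) k = ∑ i ∈ s, f i k := by
  induction s using Finset.cons_induction with
  | empty => simp [PiLp.zero_apply]
  | cons a s ha ih => rw [Finset.sum_cons, Finset.sum_cons, PiLp.add_apply, ih]

/-- (Farkas Lemma, Version IV.) For matrices `Y : d×p`, `V : d×q` and any
`z ∈ ℝᵈ`, exactly one of the following holds:
(a) `z = Yu + Vt` for some `u ≥ 0`, `t ≥ 0` with `∑ uᵢ = 1`;
(b) there are `α ∈ ℝ` and `c ∈ ℝᵈ` with `cᵀyᵢ ≥ α` for all columns `yᵢ` of `Y`,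
`cᵀvⱼ ≥ 0` for all columns `vⱼ` of `V`, and `cᵀz < α`. -/
theorem farkas_version_IV (d p q : ℕ)
    (Y : Matrix (Fin d) (Fin p) ℝ) (V : Matrix (Fin d) (Fin q) ℝ)
    (z : Fin d → ℝ) :
    Xor'
      (∃ (u : Fin p → ℝ) (t : Fin q → ℝ),
        (∀ i, 0 ≤ u i) ∧ (∀ j, 0 ≤ t j) ∧ (∑ i, u i) = 1 ∧
        z = Y.mulVec u + V.mulVec t)
      (∃ (α : ℝ) (c : Fin d → ℝ),
        (∀ i : Fin p, α ≤ ∑ k, c k * Y k i) ∧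
        (∀ j : Fin q, 0 ≤ ∑ k, c k * V k j) ∧
        (∑ k, c k * z k) < α) := by
  classical
  -- Mutual exclusivity
  have hexcl : ¬((∃ (u : Fin p → ℝ) (t : Fin q → ℝ),
        (∀ i, 0 ≤ u i) ∧ (∀ j, 0 ≤ t j) ∧ (∑ i, u i) = 1 ∧
        z = Y.mulVec u + V.mulVec t) ∧
      (∃ (α : ℝ) (c : Fin d → ℝ),
        (∀ i : Fin p, α ≤ ∑ k, c k * Y k i) ∧
        (∀ j : Fin q, 0 ≤ ∑ k, c k * V k j) ∧
        (∑ k, c k * z k) < α)) := by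
    rintro ⟨⟨u, t, hu, ht, husum, hz⟩, ⟨α, c, hY, hV, hzc⟩⟩
    have e1 : ∑ k, c k * z k
        = ∑ i, (∑ k, c k * Y k i) * u i + ∑ j, (∑ k, c k * V k j) * t j := by
      rw [hz]
      simp only [Pi.add_apply, Matrix.mulVec, dotProduct, mul_add, Finset.mul_sum,
        Finset.sum_add_distrib, Finset.sum_mul]
      congr 1
      · rw [Finset.sum_comm]
        exact Finset.sum_congr rfl fun k _ => Finset.sum_congr rfl fun i _ => by ring
      · rw [Finset.sum_comm]
        exact Finset.sum_congr rfl fun k _ => Finset.sum_congr rfl fun j _ => by ring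
    have h1 : ∑ i, α * u i ≤ ∑ i, (∑ k, c k * Y k i) * u i :=
      Finset.sum_le_sum fun i _ => mul_le_mul_of_nonneg_right (hY i) (hu i)
    have h2 : (0:ℝ) ≤ ∑ j, (∑ k, c k * V k j) * t j :=
      Finset.sum_nonneg fun j _ => mul_nonneg (hV j) (ht j)
    have h3 : ∑ i, α * u i = α := by rw [← Finset.mul_sum, husum, mul_one]
    linarith
  -- Lifted generators
  set G : Fin p ⊕ Fin q → EuclideanSpace ℝ (Fin (d+1)) :=
    Sum.elim (fun i => WithLp.toLp 2 (Fin.snoc (fun k => Y k i) 1)) (fun j => WithLp.toLp 2 (Fin.snoc (fun k => V k j) 0)) with hG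
  set zhat : EuclideanSpace ℝ (Fin (d+1)) := WithLp.toLp 2 (Fin.snoc z 1) with hzhat
  have hcoord : ∀ (w : Fin p ⊕ Fin q → ℝ) (k : Fin d),
      (∑ i, w i • G i) (Fin.castSucc k)
        = ∑ i : Fin p, w (.inl i) * Y k i + ∑ j : Fin q, w (.inr j) * V k j := by
    intro w k
    rw [farkasIV_euc_sum_apply, Fintype.sum_sum_type]
    simp [hG, PiLp.smul_apply, Fin.snoc_castSucc]
  have hlast : ∀ (w : Fin p ⊕ Fin q → ℝ),
      (∑ i, w i • G i) (Fin.last d) = ∑ i : Fin p, w (.inl i) := by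
    intro w
    rw [farkasIV_euc_sum_apply, Fintype.sum_sum_type]
    simp [hG, PiLp.smul_apply, Fin.snoc_last]
  have memiff : (∃ w : Fin p ⊕ Fin q → ℝ, (∀ i, 0 ≤ w i) ∧ zhat = ∑ i, w i • G i) ↔
      (∃ (u : Fin p → ℝ) (t : Fin q → ℝ),
        (∀ i, 0 ≤ u i) ∧ (∀ j, 0 ≤ t j) ∧ (∑ i, u i) = 1 ∧
        z = Y.mulVec u + V.mulVec t) := by
    constructor
    · rintro ⟨w, hw0, heq⟩
      refine ⟨fun i => w (.inl i), fun j => w (.inr j), fun i => hw0 _, fun j => hw0 _, ?_, ?_⟩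
      · have := congrFun (congrArg WithLp.ofLp heq) (Fin.last d)
        rw [hlast] at this
        simpa [hzhat, Fin.snoc_last] using this.symm
      · funext k
        have := congrFun (congrArg WithLp.ofLp heq) (Fin.castSucc k)
        rw [hcoord] at this
        simp only [hzhat, Fin.snoc_castSucc] at this
        simp only [Pi.add_apply, Matrix.mulVec, dotProduct]
        rw [this]
        congr 1 <;> exact Finset.sum_congr rfl fun i _ => mul_comm _ _
    · rintro ⟨u, t, hu, ht, husum, hz⟩
      refine ⟨Sum.elim u t, fun i => by cases i <;> simp [hu _, ht _], ?_⟩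
      ext k
      refine Fin.lastCases ?_ ?_ k
      · rw [hlast]
        simpa [hzhat, Fin.snoc_last] using husum.symm
      · intro k
        rw [hcoord]
        simp only [hzhat, Fin.snoc_castSucc, Sum.elim_inl, Sum.elim_inr]
        have := congrFun hz k
        simp only [Pi.add_apply, Matrix.mulVec, dotProduct] at this
        rw [this]
        congr 1 <;> exact Finset.sum_congr rfl fun i _ => mul_comm _ _
  by_cases hmem : ∃ w : Fin p ⊕ Fin q → ℝ, (∀ i, 0 ≤ w i) ∧ zhat = ∑ i, w i • G i
  · exact Or.inl ⟨memiff.1 hmem, fun hb => hexcl ⟨memiff.1 hmem, hb⟩⟩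
  · -- separation
    refine Or.inr ⟨?_, fun ha => hexcl ⟨ha, ?_⟩⟩
    swap
    · exact absurd (memiff.2 ha) hmem
    set KC : ConvexCone ℝ (EuclideanSpace ℝ (Fin (d+1))) :=
      { carrier := {x | ∃ w : Fin p ⊕ Fin q → ℝ, (∀ i, 0 ≤ w i) ∧ x = ∑ i, w i • G i}
        smul_mem' := by
          rintro a ha x ⟨w, hw0, rfl⟩
          refine ⟨fun i => a * w i, fun i => mul_nonneg ha.le (hw0 i), ?_⟩
          rw [Finset.smul_sum]
          exact Finset.sum_congr rfl fun i _ => by rw [smul_smul]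
        add_mem' := by
          rintro x ⟨w1, hw1, rfl⟩ y ⟨w2, hw2, rfl⟩
          refine ⟨fun i => w1 i + w2 i, fun i => add_nonneg (hw1 i) (hw2 i), ?_⟩
          rw [← Finset.sum_add_distrib]
          exact Finset.sum_congr rfl fun i _ => by rw [add_smul] } with hKC
    have hne : ((KC : Set (EuclideanSpace ℝ (Fin (d+1))))).Nonempty :=
      ⟨0, ⟨fun _ => 0, fun i => le_rfl, by simp⟩⟩
    have hclosed : IsClosed ((KC : Set (EuclideanSpace ℝ (Fin (d+1))))) :=
      farkasIV_cone_isClosed G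
    have hdisj : zhat ∉ KC := hmem
    obtain ⟨y, hy1, hy2⟩ : ∃ y, (∀ x ∈ KC, 0 ≤ inner ℝ x y) ∧ inner ℝ y zhat < 0 := by
      let C : ProperCone ℝ (EuclideanSpace ℝ (Fin (d+1))) :=
        { carrier := KC
          add_mem' := fun ha hb => KC.add_mem ha hb
          zero_mem' := ⟨fun _ => 0, fun i => le_rfl, by simp⟩
          smul_mem' := by
            rintro a x ⟨w, hw0, rfl⟩
            refine ⟨fun i => (a : ℝ) * w i, fun i => mul_nonneg a.2 (hw0 i), ?_⟩
            rw [Finset.smul_sum]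
            exact Finset.sum_congr rfl fun i _ => by
              show (a : ℝ) • w i • G i = _
              rw [smul_smul]
          isClosed' := hclosed }
      obtain ⟨y, h1, h2⟩ := C.hyperplane_separation' (x₀ := zhat) hdisj
      exact ⟨y, h1, by rwa [real_inner_comm]⟩
    set c : Fin d → ℝ := fun k => y (Fin.castSucc k) with hcdef
    refine ⟨-(y (Fin.last d)), c, ?_, ?_, ?_⟩
    · -- columns of Y
      intro i
      have hGK : G (.inl i) ∈ KC := by
        refine ⟨fun a => if a = .inl i then 1 else 0, fun a => by positivity, ?_⟩
        simp [ite_smul]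
      have := hy1 _ hGK
      rw [PiLp.inner_apply] at this
      simp only [RCLike.inner_apply, conj_trivial] at this
      rw [Fin.sum_univ_castSucc] at this
      simp only [hG, Sum.elim_inl, Fin.snoc_castSucc, Fin.snoc_last, one_mul] at this
      have : 0 ≤ ∑ k : Fin d, Y k i * c k + y (Fin.last d) := by
        simpa only [one_mul, mul_comm] using this
      have hc : ∑ k : Fin d, Y k i * c k = ∑ k : Fin d, c k * Y k i :=
        Finset.sum_congr rfl fun k _ => mul_comm _ _
      linarith [hc ▸ this]
    · -- columns of V
      intro j
      have hGK : G (.inr j) ∈ KC := by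
        refine ⟨fun a => if a = .inr j then 1 else 0, fun a => by positivity, ?_⟩
        simp [ite_smul]
      have := hy1 _ hGK
      rw [PiLp.inner_apply] at this
      simp only [RCLike.inner_apply, conj_trivial] at this
      rw [Fin.sum_univ_castSucc] at this
      simp only [hG, Sum.elim_inr, Fin.snoc_castSucc, Fin.snoc_last, zero_mul] at this
      have : 0 ≤ ∑ k : Fin d, V k j * c k := by simpa [mul_comm] using this
      have hc : ∑ k : Fin d, V k j * c k = ∑ k : Fin d, c k * V k j :=
        Finset.sum_congr rfl fun k _ => mul_comm _ _
      linarith [hc ▸ this]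
    · -- strict inequality
      rw [PiLp.inner_apply] at hy2
      simp only [RCLike.inner_apply, conj_trivial] at hy2
      rw [Fin.sum_univ_castSucc] at hy2
      simp only [hzhat, Fin.snoc_castSucc, Fin.snoc_last, mul_one] at hy2
      have : ∑ k : Fin d, y (Fin.castSucc k) * z k = ∑ k : Fin d, c k * z k := rfl
      simp only [one_mul, mul_comm (z _)] at hy2
      linarith [this ▸ hy2]
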